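/- arXiv:2510.21186 — 2 statements merged into one kernel-verified Lean document; each statement's English description precedes it below -/
import Mathlib

section
/- Define in the group algebra ℂ[S_k] the functions G_{k,n}(σ) = n^{κ(σ)} (κ = number of cycles) and the ascension function Asc_{k,n}(σ) = Σ_{t=0}^{fix(σ)} (-1)^{k-t} C(fix(σ),t)/n^{↑(k-t)}. For k+1 ≤ n, the Weingarten function satisfies Wg_{k,n} = Asc_{k,n} * Wg_{k,n-1}, where * is convolution in ℂ[S_k] and Wg_{k,m} is the convolution inverse of G_{k,m}. -/
open Finset

/-- Convolution product in the group algebra `ℂ[S_k]`: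
`(f * g)(π) = Σ_σ f(σ) g(σ⁻¹ π)`. -/
noncomputable def conv {k : ℕ} (f g : Equiv.Perm (Fin k) → ℂ) :
    Equiv.Perm (Fin k) → ℂ :=
  fun π => ∑ σ : Equiv.Perm (Fin k), f σ * g (σ⁻¹ * π)

/-- The number of cycles `κ(σ)` of a permutation (fixed points counted as cycles). -/
noncomputable def cyc {k : ℕ} (σ : Equiv.Perm (Fin k)) : ℕ :=
  σ.cycleType.card + (Finset.univ.filter fun i => σ i = i).card

/-- The number of fixed points of a permutation. -/
noncomputable def fixCount {k : ℕ} (σ : Equiv.Perm (Fin k)) : ℕ :=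
  (Finset.univ.filter fun i => σ i = i).card

/-- The Dirac function at the identity permutation. -/
noncomputable def deltaE {k : ℕ} : Equiv.Perm (Fin k) → ℂ :=
  fun π => if π = 1 then 1 else 0

/-- Rising factorial `z^{↑m} = z(z+1)⋯(z+m-1)`. -/
noncomputable def ascC (z : ℂ) (m : ℕ) : ℂ := ∏ j ∈ Finset.range m, (z + j)

/-- Falling factorial `z^{↓m} = z(z-1)⋯(z-m+1)`. -/
noncomputable def descC (z : ℂ) (m : ℕ) : ℂ := ∏ j ∈ Finset.range m, (z - j)

/-- The function `G_{k,z}(σ) = z^{κ(σ)}` in `ℂ[S_k]`. -/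
noncomputable def Gfun (k : ℕ) (z : ℂ) : Equiv.Perm (Fin k) → ℂ :=
  fun σ => z ^ (cyc σ)

/-- The ascension function
`Asc_{k,n}(σ) = Σ_{t=0}^{fix σ} (-1)^{k-t} C(fix σ, t)/n^{↑(k-t)}`. -/
noncomputable def AscFun (k n : ℕ) : Equiv.Perm (Fin k) → ℂ :=
  fun σ => ∑ t ∈ Finset.range (fixCount σ + 1),
    (-1 : ℂ) ^ (k - t) * ((fixCount σ).choose t : ℂ) / ascC (n : ℂ) (k - t)

/-- The descension function
`Des_{k,n}(σ) = sgn(σ) Σ_{t=0}^{fix σ} C(fix σ, t)/n^{↓(k-t)}`. -/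
noncomputable def DesFun (k n : ℕ) : Equiv.Perm (Fin k) → ℂ :=
  fun σ => ((Equiv.Perm.sign σ : ℤ) : ℂ) * ∑ t ∈ Finset.range (fixCount σ + 1),
    ((fixCount σ).choose t : ℂ) / descC (n : ℂ) (k - t)


open Equiv Equiv.Perm

variable {k : ℕ}

/-- The orbit of `x` under `σ` as a finset. -/
def orbitF (σ : Perm (Fin k)) (x : Fin k) : Finset (Fin k) :=
  univ.filter (σ.SameCycle x)

lemma mem_orbitF {σ : Perm (Fin k)} {x y : Fin k} :
    y ∈ orbitF σ x ↔ σ.SameCycle x y := by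
  simp [orbitF]

lemma mem_orbitF_iff_pow {σ : Perm (Fin k)} {x y : Fin k} :
    y ∈ orbitF σ x ↔ ∃ m : ℕ, (σ ^ m) x = y := by
  rw [mem_orbitF]
  constructor
  · intro h
    obtain ⟨m, _, hm⟩ := h.exists_pow_eq'
    exact ⟨m, hm⟩
  · rintro ⟨m, hm⟩
    exact ⟨(m : ℤ), by simpa [zpow_natCast] using hm⟩

lemma pow_mem_orbitF (σ : Perm (Fin k)) (x : Fin k) (m : ℕ) :
    (σ ^ m) x ∈ orbitF σ x :=
  mem_orbitF_iff_pow.2 ⟨m, rfl⟩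

lemma self_mem_orbitF (σ : Perm (Fin k)) (x : Fin k) : x ∈ orbitF σ x :=
  mem_orbitF.2 (SameCycle.refl _ _)

lemma orbitF_eq_of_mem {σ : Perm (Fin k)} {x y : Fin k} (h : y ∈ orbitF σ x) :
    orbitF σ x = orbitF σ y := by
  rw [mem_orbitF] at h
  ext z
  rw [mem_orbitF, mem_orbitF]
  exact ⟨fun hz => h.symm.trans hz, fun hz => h.trans hz⟩

/-- The finset of orbits of `σ`. -/
def orbs (σ : Perm (Fin k)) : Finset (Finset (Fin k)) :=
  univ.image (orbitF σ)

lemma mem_orbs {σ : Perm (Fin k)} {O : Finset (Fin k)} :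
    O ∈ orbs σ ↔ ∃ x, orbitF σ x = O := by
  simp [orbs]

/-- number of orbits -/
def kap (σ : Perm (Fin k)) : ℕ := (orbs σ).card

/-- number of orbits contained in `S` -/
def cIn (σ : Perm (Fin k)) (S : Finset (Fin k)) : ℕ :=
  ((orbs σ).filter (· ⊆ S)).card

lemma cIn_univ (σ : Perm (Fin k)) : cIn σ univ = kap σ := by
  rw [cIn, kap, filter_true_of_mem]
  intro O _
  exact subset_univ O
-- bridging
lemma orbitF_eq_singleton {σ : Perm (Fin k)} {x : Fin k} (hx : σ x = x) :
    orbitF σ x = {x} := by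
  ext y
  rw [mem_orbitF_iff_pow, mem_singleton]
  constructor
  · rintro ⟨m, rfl⟩
    induction m with
    | zero => rfl
    | succ m ih => rw [pow_succ, mul_apply, hx, ih]  -- (σ^(m+1)) x = σ^m (σ x)
  · rintro rfl; exact ⟨0, rfl⟩

lemma orbitF_eq_support_cycleOf {σ : Perm (Fin k)} {x : Fin k} (hx : σ x ≠ x) :
    orbitF σ x = (σ.cycleOf x).support := by
  ext y
  rw [mem_orbitF, mem_support_cycleOf_iff]
  simp [mem_support, hx]

lemma cyc_eq_kap (σ : Perm (Fin k)) : cyc σ = kap σ := by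
  classical
  have hsplit : (univ : Finset (Fin k)) = σ.support ∪ σ.supportᶜ := by
    simp [Finset.union_compl]
  have horbs : orbs σ = (σ.support.image (orbitF σ)) ∪ (σ.supportᶜ.image (orbitF σ)) := by
    rw [orbs, hsplit, image_union]
  -- the fixed-point part
  have hfix : (σ.supportᶜ.image (orbitF σ)) = σ.supportᶜ.image (fun x => {x}) := by
    apply image_congr
    intro x hx
    simp only [mem_coe, mem_compl, mem_support, not_not] at hx
    exact orbitF_eq_singleton hx
  have hfixcard : (σ.supportᶜ.image (orbitF σ)).card = σ.supportᶜ.card := by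
    rw [hfix]
    apply card_image_of_injOn
    intro a _ b _ hab
    simpa [Finset.singleton_inj] using hab
  -- the support part
  have hsupp : σ.support.image (orbitF σ) = σ.cycleFactorsFinset.image Equiv.Perm.support := by
    ext O
    simp only [mem_image]
    constructor
    · rintro ⟨x, hx, rfl⟩
      refine ⟨σ.cycleOf x, cycleOf_mem_cycleFactorsFinset_iff.2 hx, ?_⟩
      exact (orbitF_eq_support_cycleOf (mem_support.1 hx)).symm
    · rintro ⟨c, hc, rfl⟩
      have hcyc := (mem_cycleFactorsFinset_iff.1 hc).1
      obtain ⟨x, hx⟩ := hcyc.nonempty_support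
      have hxs : x ∈ σ.support := by
        rw [mem_support]
        rw [← (mem_cycleFactorsFinset_iff.1 hc).2 x hx]
        exact mem_support.1 hx
      refine ⟨x, hxs, ?_⟩
      rw [orbitF_eq_support_cycleOf (mem_support.1 hxs), ← cycle_is_cycleOf hx hc]
  have hsuppcard : (σ.support.image (orbitF σ)).card = σ.cycleType.card := by
    rw [hsupp, Equiv.Perm.cycleType_def, Multiset.card_map]
    apply card_image_of_injOn
    intro c1 h1 c2 h2 hsup
    obtain ⟨x, hx⟩ := (mem_cycleFactorsFinset_iff.1 h1).1.nonempty_support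
    have hx2 : x ∈ c2.support := by rw [← hsup]; exact hx
    rw [cycle_is_cycleOf hx h1, cycle_is_cycleOf hx2 h2]
  -- disjointness
  have hdisj : Disjoint (σ.support.image (orbitF σ)) (σ.supportᶜ.image (orbitF σ)) := by
    rw [Finset.disjoint_left]
    rintro O hO hO'
    rw [mem_image] at hO hO'
    obtain ⟨x, hx, rfl⟩ := hO
    obtain ⟨y, hy, hxy⟩ := hO'
    simp only [mem_compl, mem_support, not_not] at hy
    rw [orbitF_eq_singleton hy] at hxy
    have h1 : x ∈ ({y} : Finset (Fin k)) := by
      rw [hxy]; exact mem_orbitF.2 (Equiv.Perm.SameCycle.refl _ _)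
    have h2 : σ x ∈ ({y} : Finset (Fin k)) := by
      rw [hxy]; exact mem_orbitF.2 ⟨1, by simp⟩
    rw [mem_singleton] at h1 h2
    exact (mem_support.1 hx) (h2.trans h1.symm)
  have hcard : kap σ = σ.cycleType.card + σ.supportᶜ.card := by
    rw [kap, horbs, card_union_of_disjoint hdisj, hfixcard, hsuppcard]
  rw [cyc, hcard]
  congr 1
  congr 1
  ext x
  simp [mem_support]
-- orbit transfer lemma (E)
lemma orbitF_mul_swap_eq (ρ : Perm (Fin k)) (i j x : Fin k)
    (h : ∀ m : ℕ, (ρ ^ m) x ≠ i ∧ (ρ ^ m) x ≠ j) :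
    orbitF ρ x = orbitF (ρ * Equiv.swap i j) x := by
  have hpow : ∀ m : ℕ, ((ρ * Equiv.swap i j) ^ m) x = (ρ ^ m) x := by
    intro m
    induction m with
    | zero => rfl
    | succ m ih =>
      rw [pow_succ', pow_succ', mul_apply, mul_apply, ih, mul_apply,
        Equiv.swap_apply_of_ne_of_ne (h m).1 (h m).2]
  ext y
  rw [mem_orbitF_iff_pow, mem_orbitF_iff_pow]
  exact ⟨fun ⟨m, hm⟩ => ⟨m, by rw [hpow m]; exact hm⟩,
    fun ⟨m, hm⟩ => ⟨m, by rw [← hpow m]; exact hm⟩⟩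

-- Claim C
lemma cIn_mul_swap (π : Perm (Fin k)) (A : Finset (Fin k)) (i j : Fin k)
    (hi : i ∈ A) (hj : j ∈ A) :
    cIn (π * Equiv.swap i j) (A.erase i)ᶜ
      = cIn π Aᶜ + (if orbitF (π * Equiv.swap i j) i ⊆ (A.erase i)ᶜ then 1 else 0) := by
  classical
  set σ := π * Equiv.swap i j with hσ
  have hσswap : σ * Equiv.swap i j = π := by
    rw [hσ, mul_assoc, Equiv.swap_mul_self, mul_one]
  set B' := (A.erase i)ᶜ with hB'
  have hiB' : i ∈ B' := by simp [hB']
  have hmemB' : ∀ y : Fin k, y ∈ B' → y ≠ i → y ∉ A := by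
    intro y hy hyi
    rw [hB', mem_compl] at hy
    intro hyA
    exact hy (mem_erase.2 ⟨hyi, hyA⟩)
  -- the orbits not containing i
  have hset : ((orbs σ).filter (fun O => O ⊆ B' ∧ ¬ i ∈ O))
      = (orbs π).filter (· ⊆ Aᶜ) := by
    ext O
    simp only [mem_filter]
    constructor
    · rintro ⟨hO, hOB, hiO⟩
      obtain ⟨x, rfl⟩ := mem_orbs.1 hO
      have hnotij : ∀ m : ℕ, (σ ^ m) x ≠ i ∧ (σ ^ m) x ≠ j := by
        intro m
        have hmem := pow_mem_orbitF σ x m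
        constructor
        · intro hc; rw [hc] at hmem; exact hiO hmem
        · intro hc
          rw [hc] at hmem
          exact hmemB' j (hOB hmem) (fun hji => hiO (by rwa [← hc, hc, hji] at hmem))
            hj
      have := orbitF_mul_swap_eq σ i j x hnotij
      rw [hσswap] at this
      refine ⟨mem_orbs.2 ⟨x, this.symm⟩, ?_⟩
      intro y hy
      rw [mem_compl]
      exact hmemB' y (hOB hy) (fun hyi => hiO (hyi ▸ hy))
    · rintro ⟨hO, hOA⟩
      obtain ⟨x, rfl⟩ := mem_orbs.1 hO
      have hnotij : ∀ m : ℕ, (π ^ m) x ≠ i ∧ (π ^ m) x ≠ j := by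
        intro m
        have hmem := hOA (pow_mem_orbitF π x m)
        rw [mem_compl] at hmem
        exact ⟨fun hc => hmem (hc ▸ hi), fun hc => hmem (hc ▸ hj)⟩
      have := orbitF_mul_swap_eq π i j x hnotij
      rw [← hσ] at this
      refine ⟨mem_orbs.2 ⟨x, this.symm⟩, ?_, ?_⟩
      · intro y hy
        have h2 := hOA hy
        rw [mem_compl] at h2
        rw [hB', mem_compl]
        intro hc
        exact h2 (mem_of_mem_erase hc)
      · intro hc
        exact (mem_compl.1 (hOA hc)) hi
  -- the orbit containing i
  have hset2 : ((orbs σ).filter (fun O => O ⊆ B' ∧ i ∈ O))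
      = if orbitF σ i ⊆ B' then {orbitF σ i} else ∅ := by
    ext O
    simp only [mem_filter]
    constructor
    · rintro ⟨hO, hOB, hiO⟩
      obtain ⟨x, rfl⟩ := mem_orbs.1 hO
      have heq := orbitF_eq_of_mem hiO
      rw [heq] at hOB ⊢
      rw [if_pos hOB]
      exact mem_singleton.2 rfl
    · intro hO
      by_cases hc : orbitF σ i ⊆ B'
      · rw [if_pos hc, mem_singleton] at hO
        subst hO
        exact ⟨mem_orbs.2 ⟨i, rfl⟩, hc, self_mem_orbitF σ i⟩
      · rw [if_neg hc] at hO
        exact absurd hO (notMem_empty O)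
  have hsplit := card_filter_add_card_filter_not
    (s := (orbs σ).filter (· ⊆ B')) (p := fun O => i ∈ O)
  rw [filter_filter, filter_filter] at hsplit
  rw [cIn, cIn, ← hsplit, hset, hset2, add_comm]
  congr 1
  split
  · exact card_singleton _
  · exact card_empty
lemma apply_pow_inv_apply (π : Perm (Fin k)) (a : ℕ) (y : Fin k) :
    (π ^ a) ((π⁻¹ ^ a) y) = y := by
  rw [inv_pow, ← Equiv.Perm.mul_apply, mul_inv_cancel, Equiv.Perm.one_apply]

lemma pi_apply_inv_pow (π : Perm (Fin k)) {s : ℕ} (hs : 1 ≤ s) (y : Fin k) :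
    π ((π⁻¹ ^ s) y) = (π⁻¹ ^ (s - 1)) y := by
  obtain ⟨s', rfl⟩ := Nat.exists_eq_add_of_le hs
  rw [add_comm 1 s']
  rw [pow_succ', Equiv.Perm.mul_apply, ← Equiv.Perm.mul_apply, mul_inv_cancel, Equiv.Perm.one_apply, Nat.add_sub_cancel]

lemma exists_unique_good (π : Perm (Fin k)) (A : Finset (Fin k)) (i : Fin k)
    (hi : i ∈ A) :
    ∃! j, j ∈ A ∧ orbitF (π * Equiv.swap i j) i ⊆ (A.erase i)ᶜ := by
  classical
  have hiB' : i ∈ (A.erase i)ᶜ := by simp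
  have hB'A : ∀ y : Fin k, y ∈ (A.erase i)ᶜ → y ≠ i → y ∉ A := by
    intro y hy hyi hyA
    exact (mem_compl.1 hy) (mem_erase.2 ⟨hyi, hyA⟩)
  have hnA_B' : ∀ y : Fin k, y ∉ A → y ∈ (A.erase i)ᶜ := by
    intro y hy
    rw [mem_compl]
    intro hc
    exact hy (mem_of_mem_erase hc)
  have hex : ∃ m, 0 < m ∧ (π⁻¹ ^ m) i ∈ A := by
    refine ⟨orderOf π, ?_, ?_⟩
    · exact orderOf_pos π
    · rw [inv_pow, pow_orderOf_eq_one]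
      simpa using hi
  set r := Nat.find hex with hrdef
  have hr0 : 0 < r := (Nat.find_spec hex).1
  have hrA : (π⁻¹ ^ r) i ∈ A := (Nat.find_spec hex).2
  have hrmin : ∀ s, 0 < s → s < r → (π⁻¹ ^ s) i ∉ A := by
    intro s hs0 hsr hsA
    exact Nat.find_min hex hsr ⟨hs0, hsA⟩
  set j₀ := (π⁻¹ ^ r) i with hj₀
  set σ := π * Equiv.swap i j₀ with hσ
  -- trajectory of the good candidate
  have hstep : ∀ t, 1 ≤ t → t ≤ r → (σ ^ t) i = (π⁻¹ ^ (r - t)) i := by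
    intro t
    induction t with
    | zero => intro ht; omega
    | succ t ih =>
      intro _ htr
      by_cases ht : t = 0
      · subst ht
        rw [pow_one, hσ, Equiv.Perm.mul_apply, Equiv.swap_apply_left, hj₀]
        exact pi_apply_inv_pow π hr0 i
      · have h1t : 1 ≤ t := Nat.pos_of_ne_zero ht
        have hx := ih h1t (le_of_lt htr)
        have hxr0 : 0 < r - t := by omega
        have hxrr : r - t < r := by omega
        have hxA : (π⁻¹ ^ (r - t)) i ∉ A := hrmin _ hxr0 hxrr
        have hxi : (π⁻¹ ^ (r - t)) i ≠ i := fun hc => hxA (by rw [hc]; exact hi)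
        have hxj : (π⁻¹ ^ (r - t)) i ≠ j₀ := fun hc => hxA (by rw [hc]; exact hrA)
        rw [pow_succ', Equiv.Perm.mul_apply, hx, hσ, Equiv.Perm.mul_apply,
          Equiv.swap_apply_of_ne_of_ne hxi hxj, pi_apply_inv_pow π hxr0]
        congr 2
  have hri : (σ ^ r) i = i := by
    have := hstep r hr0 (le_refl r)
    simpa using this
  have hq : ∀ q : ℕ, ((σ ^ r) ^ q) i = i := by
    intro q
    induction q with
    | zero => rfl
    | succ q ih => rw [pow_succ, Equiv.Perm.mul_apply, hri, ih]
  have hper : ∀ m : ℕ, (σ ^ m) i = (σ ^ (m % r)) i := by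
    intro m
    conv_lhs => rw [← Nat.mod_add_div m r]
    rw [pow_add, Equiv.Perm.mul_apply, pow_mul, hq]
  have hgood₀ : orbitF σ i ⊆ (A.erase i)ᶜ := by
    intro y hy
    obtain ⟨m, rfl⟩ := mem_orbitF_iff_pow.1 hy
    rw [hper m]
    by_cases hm0 : m % r = 0
    · rw [hm0]; simpa using hiB'
    · have h1 : 1 ≤ m % r := Nat.pos_of_ne_zero hm0
      have h2 : m % r < r := Nat.mod_lt m hr0
      rw [hstep (m % r) h1 (le_of_lt h2)]
      exact hnA_B' _ (hrmin _ (by omega) (by omega))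
  refine ⟨j₀, ⟨hrA, hgood₀⟩, ?_⟩
  rintro j ⟨hjA, hgood⟩
  set σ' := π * Equiv.swap i j with hσ'
  have hex2 : ∃ t, 0 < t ∧ (σ' ^ t) i = i := by
    refine ⟨orderOf σ', orderOf_pos σ', by rw [pow_orderOf_eq_one]; rfl⟩
  set m := Nat.find hex2 with hmdef
  have hm0 : 0 < m := (Nat.find_spec hex2).1
  have hmi : (σ' ^ m) i = i := (Nat.find_spec hex2).2
  have hmmin : ∀ t, 0 < t → t < m → (σ' ^ t) i ≠ i := by
    intro t ht0 htm hc
    exact Nat.find_min hex2 htm ⟨ht0, hc⟩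
  have hstep2 : ∀ t, 1 ≤ t → t ≤ m → (σ' ^ t) i = (π ^ t) j := by
    intro t
    induction t with
    | zero => intro ht; omega
    | succ t ih =>
      intro _ htm
      by_cases ht : t = 0
      · subst ht
        rw [pow_one, pow_one, hσ', Equiv.Perm.mul_apply, Equiv.swap_apply_left]
      · have h1t : 1 ≤ t := Nat.pos_of_ne_zero ht
        have hx := ih h1t (le_of_lt htm)
        have hxi : (σ' ^ t) i ≠ i := hmmin t h1t htm
        have hxB' : (σ' ^ t) i ∈ (A.erase i)ᶜ := hgood (pow_mem_orbitF σ' i t)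
        have hxA : (σ' ^ t) i ∉ A := hB'A _ hxB' hxi
        have hxj : (σ' ^ t) i ≠ j := fun hc => hxA (hc ▸ hjA)
        rw [pow_succ', Equiv.Perm.mul_apply, hσ', Equiv.Perm.mul_apply,
          Equiv.swap_apply_of_ne_of_ne hxi hxj, hx, ← Equiv.Perm.mul_apply, ← pow_succ']
  have hjm : (π ^ m) j = i := by
    rw [← hstep2 m hm0 (le_refl m), hmi]
  have hjval : j = (π⁻¹ ^ m) i := by
    rw [inv_pow]
    exact (Equiv.Perm.inv_eq_iff_eq.2 hjm.symm).symm
  have hrm : r ≤ m := by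
    apply Nat.find_min' hex
    exact ⟨hm0, by rw [← hjval]; exact hjA⟩
  have hmr : m = r := by
    by_contra hne
    have hlt : r < m := lt_of_le_of_ne hrm (fun hc => hne hc.symm)
    have harc : (σ' ^ (m - r)) i = j₀ := by
      rw [hstep2 (m - r) (by omega) (by omega), hjval, hj₀]
      have hsplit : π⁻¹ ^ m = π⁻¹ ^ (m - r) * π⁻¹ ^ r := by
        rw [← pow_add]
        congr 1
        omega
      rw [hsplit, Equiv.Perm.mul_apply]
      exact apply_pow_inv_apply π (m - r) _
    have hj₀B' : j₀ ∈ (A.erase i)ᶜ := by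
      rw [← harc]
      exact hgood (pow_mem_orbitF σ' i (m - r))
    have hj₀i : j₀ = i := by
      by_contra hc
      exact hB'A j₀ hj₀B' hc hrA
    exact hmmin (m - r) (by omega) (by omega) (by rw [harc, hj₀i])
  rw [hjval, hmr]

def permsOn (A : Finset (Fin k)) : Finset (Perm (Fin k)) :=
  univ.filter (fun τ => ∀ x ∉ A, τ x = x)

lemma mem_permsOn {A : Finset (Fin k)} {τ : Perm (Fin k)} :
    τ ∈ permsOn A ↔ ∀ x ∉ A, τ x = x := by simp [permsOn]

lemma lemA (n : ℕ) : ∀ (a : ℕ) (A : Finset (Fin k)), A.card = a →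
    ∀ π : Perm (Fin k),
    ∑ τ ∈ permsOn A, n ^ kap (π * τ)
      = (∏ j ∈ range a, (n + j)) * n ^ cIn π Aᶜ := by
  intro a
  induction a with
  | zero =>
    intro A hA π
    rw [card_eq_zero] at hA
    subst hA
    have hp : permsOn (∅ : Finset (Fin k)) = {1} := by
      ext τ
      simp only [mem_permsOn, mem_singleton, notMem_empty, not_false_iff, forall_true_left]
      constructor
      · intro h; exact Equiv.ext fun x => h x
      · intro h x; rw [h]; rfl
    rw [hp, sum_singleton, mul_one, compl_empty, cIn_univ, prod_range_zero, one_mul]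
  | succ a ih =>
    intro A hA π
    have hApos : 0 < A.card := by omega
    obtain ⟨i, hi⟩ := card_pos.1 hApos
    have hAe : (A.erase i).card = a := by
      rw [card_erase_of_mem hi]; omega
    -- step 1: reindex the sum over a product
    have hbij : ∑ τ ∈ permsOn A, n ^ kap (π * τ)
        = ∑ p ∈ A ×ˢ permsOn (A.erase i),
            n ^ kap (π * (Equiv.swap i p.1 * p.2)) := by
      apply Finset.sum_nbij' (i := fun τ => (τ i, Equiv.swap i (τ i) * τ))
        (j := fun p => Equiv.swap i p.1 * p.2)
      · intro τ hτ
        rw [mem_permsOn] at hτ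
        have hτi : τ i ∈ A := by
          by_contra hc
          have h1 : τ (τ i) = τ i := hτ _ hc
          have h2 : τ i = i := τ.injective h1
          rw [h2] at hc
          exact hc hi
        rw [mem_product]
        refine ⟨hτi, mem_permsOn.2 ?_⟩
        intro x hx
        by_cases hxi : x = i
        · rw [hxi, Equiv.Perm.mul_apply]
          exact Equiv.swap_apply_right i (τ i)
        · have hxA : x ∉ A := fun hc => hx (mem_erase.2 ⟨hxi, hc⟩)
          have h1 : τ x = x := hτ x hxA
          rw [Equiv.Perm.mul_apply, h1]
          apply Equiv.swap_apply_of_ne_of_ne hxi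
          intro hc
          rw [hc] at h1
          exact hxi (hc.trans (τ.injective h1))
      · intro p hp
        rw [mem_product] at hp
        rw [mem_permsOn]
        intro x hx
        have hx1 : p.2 x = x := mem_permsOn.1 hp.2 x (fun hc => hx (mem_of_mem_erase hc))
        rw [Equiv.Perm.mul_apply, hx1]
        exact Equiv.swap_apply_of_ne_of_ne (fun hc => hx (hc ▸ hi)) (fun hc => hx (hc ▸ hp.1))
      · intro τ hτ
        simp only
        rw [← mul_assoc, Equiv.swap_mul_self, one_mul]
      · intro p hp
        rw [mem_product] at hp
        have h2 : p.2 i = i := by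
          apply mem_permsOn.1 hp.2
          simp
        have h1 : (Equiv.swap i p.1 * p.2) i = p.1 := by
          rw [Equiv.Perm.mul_apply, h2, Equiv.swap_apply_left]
        refine Prod.ext ?_ ?_
        · exact h1
        · simp only [h1]
          rw [← mul_assoc, Equiv.swap_mul_self, one_mul]
      · intro τ hτ
        have hs : Equiv.swap i (τ i) * (Equiv.swap i (τ i) * τ) = τ := by
          rw [← mul_assoc, Equiv.swap_mul_self, one_mul]
        simp only
        rw [hs]
    rw [hbij, Finset.sum_product]
    -- step 2: apply the induction hypothesis and the swap lemma
    obtain ⟨j₀, ⟨hj₀A, hj₀good⟩, huniq⟩ := exists_unique_good π A i hi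
    have hterm : ∀ j ∈ A,
        (∑ τ' ∈ permsOn (A.erase i), n ^ kap (π * (Equiv.swap i j * τ')))
          = ((∏ l ∈ range a, (n + l)) * n ^ cIn π Aᶜ) * (if j = j₀ then n else 1) := by
      intro j hj
      have : ∀ τ' : Perm (Fin k), π * (Equiv.swap i j * τ') = (π * Equiv.swap i j) * τ' := by
        intro τ'; rw [mul_assoc]
      simp_rw [this]
      rw [ih (A.erase i) hAe (π * Equiv.swap i j)]
      rw [cIn_mul_swap π A i j hi hj]
      have hcond : (orbitF (π * Equiv.swap i j) i ⊆ (A.erase i)ᶜ) ↔ j = j₀ := by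
        constructor
        · intro hg
          exact huniq j ⟨hj, hg⟩
        · rintro rfl
          exact hj₀good
      by_cases hc : j = j₀
      · rw [if_pos (hcond.2 hc), if_pos hc, pow_add, pow_one, mul_assoc]
      · rw [if_neg (fun hg => hc (hcond.1 hg)), if_neg hc, add_zero, mul_one]
    rw [Finset.sum_congr rfl hterm]
    rw [← Finset.mul_sum]
    have hsum : ∑ j ∈ A, (if j = j₀ then n else 1) = n + a := by
      rw [← Finset.add_sum_erase A _ hj₀A, if_pos rfl]
      congr 1
      rw [Finset.sum_congr rfl (fun j hj => if_neg (Finset.ne_of_mem_erase hj)),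
        Finset.sum_const, card_erase_of_mem hj₀A, smul_eq_mul, mul_one]
      omega
    rw [hsum, prod_range_succ]
    ring

lemma sum_powerset_pow_card {β : Type*} [DecidableEq β] (F : Finset β) (x : ℂ) :
    ∑ W ∈ F.powerset, x ^ W.card = (x + 1) ^ F.card := by
  rw [Finset.sum_powerset_apply_card (fun m => x ^ m), add_pow]
  apply Finset.sum_congr rfl
  intro m _
  rw [one_pow, mul_one, nsmul_eq_mul, mul_comm]

lemma sum_powerset_neg_one_pow_card_C {β : Type*} [DecidableEq β] (V : Finset β) :
    ∑ W ∈ V.powerset, (-1 : ℂ) ^ W.card = if V = ∅ then 1 else 0 := by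
  by_cases hV : V = ∅
  · subst hV; simp
  · rw [if_neg hV]
    have := Finset.sum_powerset_neg_one_pow_card_of_nonempty
      (Finset.nonempty_iff_ne_empty.2 hV)
    exact_mod_cast congrArg (fun z : ℤ => (z : ℂ)) this

lemma neg_one_pow_sub_C {K s : ℕ} (h : s ≤ K) :
    (-1 : ℂ) ^ (K - s) = (-1) ^ K * (-1) ^ s := by
  have h1 : (-1 : ℂ) ^ (K - s) * (-1) ^ s = (-1) ^ K := by
    rw [← pow_add, Nat.sub_add_cancel h]
  have h2 : (-1 : ℂ) ^ s * (-1) ^ s = 1 := by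
    rw [← pow_add, ← two_mul, pow_mul, neg_one_sq, one_pow]
  calc (-1:ℂ)^(K-s) = (-1)^(K-s) * ((-1)^s * (-1)^s) := by rw [h2, mul_one]
    _ = ((-1)^(K-s) * (-1)^s) * (-1)^s := by ring
    _ = (-1)^K * (-1)^s := by rw [h1]

lemma superset_sum (U : Finset (Fin k)) :
    ∑ S ∈ (univ : Finset (Fin k)).powerset.filter (fun S => U ⊆ S),
        (-1 : ℂ) ^ (k - S.card)
      = if U = univ then 1 else 0 := by
  have hre : ∑ S ∈ (univ : Finset (Fin k)).powerset.filter (fun S => U ⊆ S),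
      (-1:ℂ)^(k - S.card)
      = ∑ R ∈ Uᶜ.powerset, (-1:ℂ)^(k - (U ∪ R).card) := by
    apply Finset.sum_nbij' (i := fun S => S \ U) (j := fun R => U ∪ R)
    · intro S hS
      rw [mem_filter] at hS
      rw [mem_powerset]
      intro y hy
      rw [mem_sdiff] at hy
      rw [mem_compl]
      exact hy.2
    · intro R hR
      rw [mem_filter, mem_powerset]
      exact ⟨subset_univ _, subset_union_left⟩
    · intro S hS
      rw [mem_filter] at hS
      exact union_sdiff_of_subset hS.2
    · intro R hR
      rw [mem_powerset] at hR
      apply union_sdiff_cancel_left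
      rw [Finset.disjoint_left]
      intro y hyU hyR
      exact (mem_compl.1 (hR hyR)) hyU
    · intro S hS
      rw [mem_filter] at hS
      rw [union_sdiff_of_subset hS.2]
  rw [hre]
  have hterm : ∀ R ∈ Uᶜ.powerset,
      (-1:ℂ)^(k - (U ∪ R).card) = (-1)^(k - U.card) * (-1)^R.card := by
    intro R hR
    rw [mem_powerset] at hR
    have hdisj : Disjoint U R := by
      rw [Finset.disjoint_left]
      intro y hyU hyR
      exact (mem_compl.1 (hR hyR)) hyU
    have hcard : (U ∪ R).card = U.card + R.card := card_union_of_disjoint hdisj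
    have hRle : R.card ≤ k - U.card := by
      have h1 : R.card ≤ Uᶜ.card := card_le_card hR
      have h2 : Uᶜ.card = k - U.card := by
        rw [card_compl, Fintype.card_fin]
      omega
    rw [hcard, ← Nat.sub_sub, neg_one_pow_sub_C hRle]
  rw [Finset.sum_congr rfl hterm, ← Finset.mul_sum, sum_powerset_neg_one_pow_card_C]
  by_cases hU : U = univ
  · rw [if_pos hU, hU]
    rw [if_pos (by simp), card_univ, Fintype.card_fin]
    simp
  · rw [if_neg hU, if_neg, mul_zero]
    intro hc
    apply hU
    rw [← compl_compl U, hc, compl_empty]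

lemma sup_orbs (π : Perm (Fin k)) : (orbs π).sup id = univ := by
  apply subset_antisymm (subset_univ _)
  intro x _
  apply Finset.mem_sup.2
  exact ⟨orbitF π x, mem_orbs.2 ⟨x, rfl⟩, self_mem_orbitF π x⟩

lemma eq_orbs_of_sup {π : Perm (Fin k)} {W : Finset (Finset (Fin k))}
    (hW : W ⊆ orbs π) (hsup : W.sup id = univ) : W = orbs π := by
  apply subset_antisymm hW
  intro O hO
  obtain ⟨x, rfl⟩ := mem_orbs.1 hO
  have hx : x ∈ W.sup id := by rw [hsup]; exact mem_univ x
  obtain ⟨O', hO'W, hxO'⟩ := Finset.mem_sup.1 hx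
  obtain ⟨y, hy⟩ := mem_orbs.1 (hW hO'W)
  have hxy : x ∈ orbitF π y := by rw [hy]; exact hxO'
  have : orbitF π y = orbitF π x := orbitF_eq_of_mem hxy
  rw [← this, hy]
  exact hO'W

lemma lemB (π : Perm (Fin k)) (x : ℂ) :
    ∑ S ∈ (univ : Finset (Fin k)).powerset,
        (-1:ℂ)^(k - S.card) * (x+1)^(cIn π S) = x ^ kap π := by
  classical
  have hps : ∀ S : Finset (Fin k), ((orbs π).filter (· ⊆ S)).powerset
      = (orbs π).powerset.filter (fun W => ∀ O ∈ W, O ⊆ S) := by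
    intro S
    ext W
    simp only [mem_powerset, mem_filter]
    constructor
    · intro h
      constructor
      · exact h.trans (filter_subset _ _)
      · intro O hO
        exact (mem_filter.1 (h hO)).2
    · rintro ⟨h1, h2⟩
      intro O hO
      exact mem_filter.2 ⟨h1 hO, h2 O hO⟩
  have hexp : ∀ S : Finset (Fin k), (x+1)^(cIn π S)
      = ∑ W ∈ (orbs π).powerset, if (∀ O ∈ W, O ⊆ S) then x ^ W.card else 0 := by
    intro S
    rw [cIn, ← sum_powerset_pow_card, hps S, Finset.sum_filter]
  calc ∑ S ∈ (univ : Finset (Fin k)).powerset, (-1:ℂ)^(k - S.card) * (x+1)^(cIn π S)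
      = ∑ S ∈ (univ : Finset (Fin k)).powerset, ∑ W ∈ (orbs π).powerset,
          (if (∀ O ∈ W, O ⊆ S) then (-1:ℂ)^(k - S.card) * x ^ W.card else 0) := by
        apply Finset.sum_congr rfl
        intro S _
        rw [hexp S, Finset.mul_sum]
        apply Finset.sum_congr rfl
        intro W _
        rw [mul_ite, mul_zero]
    _ = ∑ W ∈ (orbs π).powerset, ∑ S ∈ (univ : Finset (Fin k)).powerset,
          (if (∀ O ∈ W, O ⊆ S) then (-1:ℂ)^(k - S.card) * x ^ W.card else 0) :=
        Finset.sum_comm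
    _ = ∑ W ∈ (orbs π).powerset, (if W.sup id = univ then 1 else 0) * x ^ W.card := by
        apply Finset.sum_congr rfl
        intro W _
        have hcond : ∀ S : Finset (Fin k), (∀ O ∈ W, O ⊆ S) ↔ W.sup id ⊆ S := by
          intro S
          constructor
          · intro h
            exact Finset.sup_le fun O hO => h O hO
          · intro h O hO
            exact (Finset.le_sup (f := id) hO).trans h
        calc ∑ S ∈ (univ : Finset (Fin k)).powerset,
              (if (∀ O ∈ W, O ⊆ S) then (-1:ℂ)^(k - S.card) * x ^ W.card else 0)
            = ∑ S ∈ (univ : Finset (Fin k)).powerset,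
              (if W.sup id ⊆ S then (-1:ℂ)^(k - S.card) else 0) * x ^ W.card := by
              apply Finset.sum_congr rfl
              intro S _
              rw [if_congr (hcond S) rfl rfl, ite_mul, zero_mul]
          _ = (∑ S ∈ (univ : Finset (Fin k)).powerset.filter (fun S => W.sup id ⊆ S),
                (-1:ℂ)^(k - S.card)) * x ^ W.card := by
              rw [Finset.sum_mul, Finset.sum_filter]
              apply Finset.sum_congr rfl
              intro S _
              rw [ite_mul, zero_mul]
          _ = (if W.sup id = univ then 1 else 0) * x ^ W.card := by
              rw [superset_sum]
    _ = x ^ kap π := by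
        rw [Finset.sum_eq_single_of_mem (orbs π) (mem_powerset_self _)]
        · rw [if_pos (sup_orbs π), one_mul, kap]
        · intro W hW hne
          rw [if_neg, zero_mul]
          intro hc
          exact hne (eq_orbs_of_sup (mem_powerset.1 hW) hc)

lemma conv_deltaE (f : Perm (Fin k) → ℂ) : conv f deltaE = f := by
  funext π
  simp only [conv, deltaE, inv_mul_eq_one, mul_ite, mul_one, mul_zero]
  rw [Finset.sum_ite_eq' univ π f]
  simp

lemma deltaE_conv (f : Perm (Fin k) → ℂ) : conv deltaE f = f := by
  funext π
  simp only [conv, deltaE, ite_mul, one_mul, zero_mul]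
  rw [Finset.sum_ite_eq' univ (1 : Perm (Fin k)) (fun σ => f (σ⁻¹ * π))]
  simp

lemma conv_assoc (f g h : Perm (Fin k) → ℂ) :
    conv (conv f g) h = conv f (conv g h) := by
  funext π
  simp only [conv, Finset.sum_mul, Finset.mul_sum]
  rw [Finset.sum_comm]
  apply Finset.sum_congr rfl
  intro ρ _
  rw [← Equiv.sum_comp (Equiv.mulLeft ρ) (fun σ => f ρ * g (ρ⁻¹ * σ) * h (σ⁻¹ * π))]
  apply Finset.sum_congr rfl
  intro μ _
  simp only [Equiv.coe_mulLeft]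
  rw [inv_mul_cancel_left, mul_inv_rev, mul_assoc, mul_assoc]

lemma fixCount_inv (τ : Perm (Fin k)) : fixCount τ⁻¹ = fixCount τ := by
  unfold fixCount
  congr 1
  ext x
  simp only [mem_filter, mem_univ, true_and]
  constructor
  · intro h
    conv_lhs => rw [← h]
    exact Equiv.apply_symm_apply τ x
  · intro h
    conv_lhs => rw [← h]
    exact Equiv.symm_apply_apply τ x

lemma AscFun_inv (n : ℕ) (τ : Perm (Fin k)) : AscFun k n τ⁻¹ = AscFun k n τ := by
  unfold AscFun
  rw [fixCount_inv]

lemma AscFun_eq_sum_powerset (n : ℕ) (τ : Perm (Fin k)) :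
    AscFun k n τ = ∑ S ∈ (Finset.univ.filter fun i => τ i = i).powerset,
      (-1:ℂ)^(k - S.card) / ascC (n : ℂ) (k - S.card) := by
  rw [Finset.sum_powerset_apply_card (fun m => (-1:ℂ)^(k-m) / ascC (n:ℂ) (k-m))]
  unfold AscFun fixCount
  apply Finset.sum_congr rfl
  intro m _
  rw [nsmul_eq_mul]
  ring

lemma ascC_ne_zero {n : ℕ} (hn : 1 ≤ n) (m : ℕ) : ascC (n : ℂ) m ≠ 0 := by
  unfold ascC
  rw [Finset.prod_ne_zero_iff]
  intro j _
  have : ((n : ℂ) + j) = ((n + j : ℕ) : ℂ) := by push_cast; ring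
  rw [this]
  exact Nat.cast_ne_zero.2 (by omega)

lemma keyIdentity (n : ℕ) (hn : 1 ≤ n) :
    conv (Gfun k (n : ℂ)) (AscFun k n) = Gfun k ((n - 1 : ℕ) : ℂ) := by
  funext π
  have hcast : ((n - 1 : ℕ) : ℂ) = (n : ℂ) - 1 := by
    push_cast [Nat.cast_sub hn]
    ring
  unfold conv Gfun
  have h1 : ∑ σ : Perm (Fin k), (n:ℂ) ^ cyc σ * AscFun k n (σ⁻¹ * π)
      = ∑ τ : Perm (Fin k), (n:ℂ) ^ cyc (π * τ) * AscFun k n τ := by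
    rw [← Equiv.sum_comp (Equiv.mulLeft π)
      (fun σ => (n:ℂ) ^ cyc σ * AscFun k n (σ⁻¹ * π))]
    apply Finset.sum_congr rfl
    intro τ _
    simp only [Equiv.coe_mulLeft]
    rw [mul_inv_rev, mul_assoc, inv_mul_cancel, mul_one, AscFun_inv]
  rw [h1]
  simp only [cyc_eq_kap]
  have h2 : ∀ τ : Perm (Fin k), (n:ℂ) ^ kap (π * τ) * AscFun k n τ
      = ∑ S ∈ (univ : Finset (Fin k)).powerset,
          (if S ⊆ (Finset.univ.filter fun i => τ i = i) then
            (n:ℂ) ^ kap (π * τ) * ((-1:ℂ)^(k - S.card) / ascC (n:ℂ) (k - S.card))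
          else 0) := by
    intro τ
    rw [AscFun_eq_sum_powerset, Finset.mul_sum]
    have hpw : (Finset.univ.filter fun i => τ i = i).powerset
        = (univ : Finset (Fin k)).powerset.filter
            (fun S => S ⊆ Finset.univ.filter fun i => τ i = i) := by
      ext S
      simp only [mem_powerset, mem_filter]
      exact ⟨fun h => ⟨subset_univ S, h⟩, fun h => h.2⟩
    rw [hpw, Finset.sum_filter]
  rw [Finset.sum_congr rfl (fun τ _ => h2 τ), Finset.sum_comm]
  have h3 : ∀ S ∈ (univ : Finset (Fin k)).powerset,
      (∑ τ : Perm (Fin k), if S ⊆ (Finset.univ.filter fun i => τ i = i) then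
          (n:ℂ) ^ kap (π * τ) * ((-1:ℂ)^(k - S.card) / ascC (n:ℂ) (k - S.card)) else 0)
      = (-1:ℂ)^(k - S.card) * ((n:ℂ) - 1 + 1) ^ cIn π S := by
    intro S _
    rw [← Finset.sum_filter]
    have hfilt : (univ : Finset (Perm (Fin k))).filter
        (fun τ => S ⊆ Finset.univ.filter fun i => τ i = i) = permsOn Sᶜ := by
      ext τ
      simp only [mem_filter, mem_univ, true_and, mem_permsOn]
      constructor
      · intro h x hx
        have hxS : x ∈ S := by
          by_contra hc
          exact hx (mem_compl.2 hc)
        exact (mem_filter.1 (h hxS)).2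
      · intro h x hx
        refine mem_filter.2 ⟨mem_univ x, ?_⟩
        apply h
        rw [mem_compl]
        exact fun hc => hc hx
    rw [hfilt]
    rw [← Finset.sum_mul]
    have hSc : Sᶜ.card = k - S.card := by
      rw [card_compl, Fintype.card_fin]
    have hA := lemA n (Sᶜ.card) Sᶜ rfl π
    rw [compl_compl] at hA
    have hAc : ∑ τ ∈ permsOn Sᶜ, (n:ℂ) ^ kap (π * τ)
        = ascC (n:ℂ) (k - S.card) * (n:ℂ) ^ cIn π S := by
      have hc := congrArg (fun z : ℕ => (z : ℂ)) hA
      push_cast at hc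
      rw [hc, hSc]
      rfl
    rw [hAc]
    have hnz := ascC_ne_zero hn (k - S.card)
    have hn1 : (n:ℂ) - 1 + 1 = (n:ℂ) := by ring
    rw [hn1]
    field_simp
  rw [Finset.sum_congr rfl h3, lemB π ((n:ℂ) - 1), hcast]

/-- For `k + 1 ≤ n`, the Weingarten function satisfies
`Wg_{k,n} = Asc_{k,n} * Wg_{k,n-1}`, where `Wg_{k,m}` denotes the convolution inverse of
`G_{k,m}(σ) = m^{κ(σ)}` in `ℂ[S_k]`. -/
theorem weingarten_ascension_recursion (k n : ℕ) (h : k + 1 ≤ n)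
    (Wgn Wgm : Equiv.Perm (Fin k) → ℂ)
    (h1 : conv (Gfun k (n : ℂ)) Wgn = deltaE)
    (h1' : conv Wgn (Gfun k (n : ℂ)) = deltaE)
    (h2 : conv (Gfun k ((n - 1 : ℕ) : ℂ)) Wgm = deltaE)
    (h2' : conv Wgm (Gfun k ((n - 1 : ℕ) : ℂ)) = deltaE) :
    Wgn = conv (AscFun k n) Wgm := by
  have hn1 : 1 ≤ n := by omega
  have hkey := keyIdentity (k := k) n hn1
  calc Wgn = conv Wgn deltaE := (conv_deltaE Wgn).symm
    _ = conv Wgn (conv (Gfun k ((n - 1 : ℕ) : ℂ)) Wgm) := by rw [h2]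
    _ = conv Wgn (conv (conv (Gfun k (n : ℂ)) (AscFun k n)) Wgm) := by rw [hkey]
    _ = conv Wgn (conv (Gfun k (n : ℂ)) (conv (AscFun k n) Wgm)) := by rw [conv_assoc]
    _ = conv (conv Wgn (Gfun k (n : ℂ))) (conv (AscFun k n) Wgm) := by rw [conv_assoc]
    _ = conv deltaE (conv (AscFun k n) Wgm) := by rw [h1']
    _ = conv (AscFun k n) Wgm := deltaE_conv _
end

section
/- For k+1 ≤ n, the ascension function satisfies Asc_{k,n} = G_{k,n-1} * Wg_{k,n} = Wg_{k,n} * G_{k,n-1} in ℂ[S_k]. -/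
open Finset

set_option linter.unusedSectionVars false
set_option linter.unusedVariables false
set_option maxHeartbeats 1000000

namespace AscWgAux

open Equiv Equiv.Perm Finset

variable {α : Type*} [Fintype α] [DecidableEq α]

open Equiv Equiv.Perm Finset

variable {α : Type*} [Fintype α] [DecidableEq α]

/-- Orbit of `a` under `π` as a Finset. -/
def orb (π : Perm α) (a : α) : Finset α := univ.filter (π.SameCycle a ·)

/-- The set of orbits of `π`. -/
def orbs (π : Perm α) : Finset (Finset α) := univ.image (orb π)

lemma mem_orb {π : Perm α} {a b : α} : b ∈ orb π a ↔ π.SameCycle a b := by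
  simp [orb]

lemma self_mem_orb (π : Perm α) (a : α) : a ∈ orb π a := mem_orb.2 (SameCycle.refl _ _)

lemma orb_eq_of_mem {π : Perm α} {a b : α} (h : b ∈ orb π a) : orb π b = orb π a := by
  ext c; rw [mem_orb] at h ⊢; rw [mem_orb]
  exact ⟨fun hc => h.trans hc, fun hc => h.symm.trans hc⟩

lemma exists_pow_of_mem_orb {π : Perm α} {a b : α} (h : b ∈ orb π a) :
    ∃ i : ℕ, (π ^ i) a = b := by
  obtain ⟨i, _, _, hi⟩ := (mem_orb.1 h).exists_pow_eq π
  exact ⟨i, hi⟩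

lemma pow_mem_orb (π : Perm α) (a : α) (i : ℕ) : (π ^ i) a ∈ orb π a :=
  mem_orb.2 ⟨(i : ℤ), by simp⟩

lemma orb_fixed {π : Perm α} {a : α} (h : π a = a) : orb π a = {a} := by
  ext b
  simp only [mem_orb, Finset.mem_singleton]
  constructor
  · intro hb
    obtain ⟨i, hi⟩ := exists_pow_of_mem_orb (mem_orb.2 hb)
    rw [← hi]
    clear hi
    induction i with
    | zero => simp
    | succ n ih => rw [pow_succ, Perm.mul_apply, h, ih]
  · rintro rfl; exact SameCycle.refl _ _

lemma apply_mem_orb {π : Perm α} {a b : α} (h : b ∈ orb π a) : π b ∈ orb π a := by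
  rw [mem_orb] at h ⊢; exact Equiv.Perm.sameCycle_apply_right.2 h

/-- orbit of a support element equals support of cycleOf -/
lemma orb_eq_support_cycleOf {π : Perm α} {a : α} (h : a ∈ π.support) :
    orb π a = (π.cycleOf a).support := by
  ext b; rw [mem_orb, Equiv.Perm.mem_support_cycleOf_iff]
  exact ⟨fun hb => ⟨hb, h⟩, fun hb => hb.1⟩

/-- Number of orbits = cycleType.card + fixCount -/
lemma card_orbs (π : Perm α) :
    (orbs π).card = π.cycleType.card + (univ.filter fun i => π i = i).card := by
  classical
  have huniv : (univ : Finset α) = π.support ∪ π.supportᶜ := by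
    simp
  have horbs : orbs π = univ.image (orb π) := rfl
  have hfix : (univ.filter fun i => π i = i) = π.supportᶜ := by
    ext a; simp [Equiv.Perm.mem_support]
  rw [hfix, horbs, huniv, Finset.image_union]
  -- image over supportᶜ : singletons
  have h2 : (π.supportᶜ).image (orb π) = (π.supportᶜ).image (fun a => ({a} : Finset α)) := by
    apply Finset.image_congr
    intro a ha
    simp only [Finset.mem_coe, Finset.mem_compl, Equiv.Perm.mem_support, not_not] at ha
    exact orb_fixed ha
  have hcard2 : ((π.supportᶜ).image (orb π)).card = (π.supportᶜ).card := by
    rw [h2, Finset.card_image_of_injective _ (fun a b hab => Finset.singleton_inj.1 hab)]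
  -- image over support = image of support over cycleFactorsFinset
  have h1 : (π.support).image (orb π) = (π.cycleFactorsFinset).image Equiv.Perm.support := by
    ext O
    simp only [Finset.mem_image]
    constructor
    · rintro ⟨a, ha, rfl⟩
      exact ⟨π.cycleOf a, Equiv.Perm.cycleOf_mem_cycleFactorsFinset_iff.2 ha,
        (orb_eq_support_cycleOf ha).symm⟩
    · rintro ⟨c, hc, rfl⟩
      have hc' : c.IsCycle := (Equiv.Perm.mem_cycleFactorsFinset_iff.1 hc).1
      obtain ⟨a, ha⟩ := hc'.nonempty_support
      have := Equiv.Perm.cycle_is_cycleOf ha hc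
      have hasupp : a ∈ π.support := by
        rw [Equiv.Perm.mem_support]
        have := (Equiv.Perm.mem_cycleFactorsFinset_iff.1 hc).2 a ha
        rw [← this]
        exact Equiv.Perm.mem_support.1 ha
      refine ⟨a, hasupp, ?_⟩
      rw [orb_eq_support_cycleOf hasupp, ← Equiv.Perm.cycle_is_cycleOf ha hc]
  have hcard1 : ((π.support).image (orb π)).card = π.cycleType.card := by
    rw [h1, Equiv.Perm.cycleType_def, Multiset.card_map]
    rw [Finset.card_image_of_injOn]
    · rfl
    · intro c hc c' hc' hcc'
      by_contra hne
      have hd := π.cycleFactorsFinset_pairwise_disjoint hc hc' hne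
      rw [Equiv.Perm.disjoint_iff_disjoint_support, hcc'] at hd
      have hc2 : c'.IsCycle := (Equiv.Perm.mem_cycleFactorsFinset_iff.1 (by exact_mod_cast hc')).1
      obtain ⟨a, ha⟩ := hc2.nonempty_support
      exact absurd (Finset.disjoint_left.1 hd ha) (by simp [ha])
  -- disjointness of the two images
  have hdisj : Disjoint ((π.support).image (orb π)) ((π.supportᶜ).image (orb π)) := by
    rw [Finset.disjoint_left]
    rintro O hO hO'
    rw [h2] at hO'
    simp only [Finset.mem_image] at hO hO'
    obtain ⟨a, ha, rfl⟩ := hO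
    obtain ⟨b, hb, hba⟩ := hO'
    have h2mem : π a ∈ orb π a := apply_mem_orb (self_mem_orb π a)
    have h1mem : a ∈ orb π a := self_mem_orb π a
    rw [← hba] at h2mem h1mem
    simp only [Finset.mem_singleton] at h2mem h1mem
    exact (Equiv.Perm.mem_support.1 ha) (h2mem.trans h1mem.symm)
  rw [Finset.card_union_of_disjoint hdisj, hcard1, hcard2]

/-- Traversal lemma: powers of `swap s x * π` agree with powers of `π` while the
walk does not hit `s` or `x`. -/
lemma pow_swap_mul_eq (π : Perm α) (s x a : α) (n : ℕ)
    (h : ∀ i < n, (π ^ (i+1)) a ≠ s ∧ (π ^ (i+1)) a ≠ x) :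
    ((swap s x * π) ^ n) a = (π ^ n) a := by
  induction n with
  | zero => rfl
  | succ n ih =>
    have ih' := ih (fun i hi => h i (Nat.lt_succ_of_lt hi))
    have hne := h n (Nat.lt_succ_self n)
    rw [pow_succ', pow_succ', Perm.mul_apply, Perm.mul_apply, ih', Perm.mul_apply]
    have hfold : π ((π ^ n) a) = (π ^ (n+1)) a := by rw [pow_succ', Perm.mul_apply]
    rw [hfold]
    exact Equiv.swap_apply_of_ne_of_ne hne.1 hne.2

/-- If the orbit of `a` avoids `s` and `x`, the orbit under `swap s x * π` is unchanged. -/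
lemma orb_swap_eq {π : Perm α} {s x a : α} {S : Finset α}
    (hS : orb π a ⊆ S) (hs : s ∉ orb π a) (hx : x ∉ S) :
    orb (swap s x * π) a = orb π a := by
  have key : ∀ n : ℕ, ((swap s x * π) ^ n) a = (π ^ n) a := by
    intro n
    apply pow_swap_mul_eq
    intro i _
    have hmem : (π ^ (i+1)) a ∈ orb π a := pow_mem_orb π a (i+1)
    exact ⟨fun he => hs (he ▸ hmem), fun he => hx (hS (he ▸ hmem))⟩
  ext b
  constructor
  · intro hb
    obtain ⟨n, hn⟩ := exists_pow_of_mem_orb hb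
    rw [← hn, key]
    exact pow_mem_orb π a n
  · intro hb
    obtain ⟨n, hn⟩ := exists_pow_of_mem_orb hb
    rw [← hn, ← key]
    exact pow_mem_orb _ a n

/-- Case (i): if the orbit of `s` is inside `S` and `x ∉ S`, then the new orbit of `s`
escapes `S` (it contains `x`). -/
lemma not_orb_swap_subset {π : Perm α} {s x : α} {S : Finset α}
    (hs : s ∈ S) (hx : x ∉ S) (hOs : orb π s ⊆ S) :
    ¬ orb (swap s x * π) s ⊆ S := by
  have hper : ∃ j, 0 < j ∧ (π ^ j) s = s :=
    ⟨orderOf π, orderOf_pos π, by rw [pow_orderOf_eq_one]; rfl⟩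
  classical
  set j := Nat.find hper with hjdef
  obtain ⟨hj0, hjs⟩ := Nat.find_spec hper
  have hmin : ∀ i, 0 < i → i < j → (π ^ i) s ≠ s := by
    intro i hi0 hij he
    exact Nat.find_min hper hij ⟨hi0, he⟩
  have key : ((swap s x * π) ^ (j-1)) s = (π ^ (j-1)) s := by
    apply pow_swap_mul_eq
    intro i hi
    have h1 : i + 1 < j := by omega
    constructor
    · exact hmin (i+1) (Nat.succ_pos i) h1
    · intro he
      exact hx (hOs (he ▸ pow_mem_orb π s (i+1)))
  have hxmem : ((swap s x * π) ^ j) s = x := by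
    have hj : j = (j - 1) + 1 := by omega
    have hfold : π ((π ^ (j-1)) s) = (π ^ j) s := by
      conv_rhs => rw [hj]
      rw [pow_succ', Perm.mul_apply]
    rw [hj, pow_succ', Perm.mul_apply, key, Perm.mul_apply, hfold, hjs, Equiv.swap_apply_left]
  intro hsub
  have hm := pow_mem_orb (swap s x * π) s j
  rw [hxmem] at hm
  exact hx (hsub hm)

/-- Case (ii): if the orbit of `s` leaves `S`, there is a unique exit `x*` outside `S`
such that `swap s x* * π` closes the initial segment into a cycle inside `S`. -/
lemma exists_unique_exit {π : Perm α} {s : α} {S : Finset α}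
    (hs : s ∈ S) (hOs : ¬ orb π s ⊆ S) :
    ∃ xs, xs ∉ S ∧ ∀ x, x ∉ S → (orb (swap s x * π) s ⊆ S ↔ x = xs) := by
  classical
  have hex : ∃ j : ℕ, (π ^ j) s ∉ S := by
    obtain ⟨b, hb, hbS⟩ := Finset.not_subset.1 hOs
    obtain ⟨n, hn⟩ := exists_pow_of_mem_orb hb
    exact ⟨n, hn ▸ hbS⟩
  set j := Nat.find hex with hjdef
  have hxs : (π ^ j) s ∉ S := Nat.find_spec hex
  have hmin : ∀ i < j, (π ^ i) s ∈ S := fun i hi => not_not.1 (Nat.find_min hex hi)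
  have hj0 : 0 < j := by
    rcases Nat.eq_zero_or_pos j with h0 | h
    · exfalso; apply hxs; rw [h0]; simpa using hs
    · exact h
  have nonret : ∀ q, 0 < q → q < j → (π ^ q) s ≠ s := by
    intro q hq0 hqj he
    apply hxs
    have : (π ^ j) s = (π ^ (j - q)) s := by
      have hd : j = (j - q) + q := by omega
      conv_lhs => rw [hd]
      rw [pow_add, Perm.mul_apply, he]
    rw [this]
    exact hmin _ (by omega)
  refine ⟨(π ^ j) s, hxs, ?_⟩
  intro x hx
  constructor
  · -- if closed inside S, then x must be the exit
    intro hsub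
    by_contra hne
    have key : ((swap s x * π) ^ j) s = (π ^ j) s := by
      apply pow_swap_mul_eq
      intro i hi
      rcases Nat.lt_or_ge (i+1) j with h1 | h1
      · exact ⟨nonret (i+1) (Nat.succ_pos i) h1, fun he => hx (he ▸ hmin (i+1) h1)⟩
      · have hij : i + 1 = j := by omega
        rw [hij]
        exact ⟨fun he => hxs (by rw [he]; exact hs), fun he => hne he.symm⟩
    have hm := pow_mem_orb (swap s x * π) s j
    rw [key] at hm
    exact hxs (hsub hm)
  · -- if x = exit, orbit of s closes up inside S
    rintro rfl
    set ρ := swap s ((π ^ j) s) * π with hρ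
    have keylt : ∀ r ≤ j - 1, (ρ ^ r) s = (π ^ r) s := by
      intro r hr
      apply pow_swap_mul_eq
      intro i hi
      have h1 : i + 1 < j := by omega
      exact ⟨nonret (i+1) (Nat.succ_pos i) h1, fun he => hxs (he ▸ hmin (i+1) h1)⟩
    have hper : (ρ ^ j) s = s := by
      have hj : j = (j - 1) + 1 := by omega
      have hfold : π ((π ^ (j-1)) s) = (π ^ j) s := by
        conv_rhs => rw [hj]
        rw [pow_succ', Perm.mul_apply]
      rw [hj, pow_succ', Perm.mul_apply, keylt (j-1) le_rfl, hρ, Perm.mul_apply, hfold,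
        Equiv.swap_apply_right]
    have hrS : ∀ r < j, (ρ ^ r) s ∈ S := by
      intro r hr
      rw [keylt r (by omega)]
      exact hmin r hr
    intro b hb
    obtain ⟨n, hn⟩ := exists_pow_of_mem_orb hb
    have hfix : ∀ q : ℕ, ((ρ ^ j) ^ q) s = s := by
      intro q
      induction q with
      | zero => rfl
      | succ q ih => rw [pow_succ', Perm.mul_apply, ih, hper]
    have hmod : (ρ ^ n) s = (ρ ^ (n % j)) s := by
      conv_lhs => rw [← Nat.mod_add_div n j]
      rw [pow_add, Perm.mul_apply, pow_mul, hfix]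
    rw [← hn, hmod]
    exact hrS _ (Nat.mod_lt _ hj0)

/-- number of orbits of `π` contained in `S` -/
def cS (S : Finset α) (π : Perm α) : ℕ := ((orbs π).filter (· ⊆ S)).card

lemma cS_univ (π : Perm α) : cS univ π = (orbs π).card := by
  unfold cS
  congr 1
  apply Finset.filter_true_of_mem
  intro O _
  exact Finset.subset_univ O

lemma orb_mem_orbs (π : Perm α) (a : α) : orb π a ∈ orbs π :=
  Finset.mem_image.2 ⟨a, Finset.mem_univ a, rfl⟩

lemma eq_orb_of_mem_orbs {π : Perm α} {O : Finset α} (hO : O ∈ orbs π) {a : α} (ha : a ∈ O) :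
    O = orb π a := by
  obtain ⟨b, _, rfl⟩ := Finset.mem_image.1 hO
  exact (orb_eq_of_mem ha).symm

lemma cS_split {π : Perm α} {S : Finset α} (s : α) :
    cS S π = ((orbs π).filter (fun O => O ⊆ S ∧ s ∉ O)).card
      + (if orb π s ⊆ S then 1 else 0) := by
  classical
  have hsplit : (orbs π).filter (· ⊆ S) =
      (orbs π).filter (fun O => O ⊆ S ∧ s ∉ O) ∪ (orbs π).filter (fun O => O ⊆ S ∧ s ∈ O) := by
    ext O
    simp only [Finset.mem_filter, Finset.mem_union]
    tauto
  have hdisj : Disjoint ((orbs π).filter (fun O => O ⊆ S ∧ s ∉ O))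
      ((orbs π).filter (fun O => O ⊆ S ∧ s ∈ O)) := by
    rw [Finset.disjoint_left]
    intro O h1 h2
    simp only [Finset.mem_filter] at h1 h2
    exact h1.2.2 h2.2.2
  have hsec : (orbs π).filter (fun O => O ⊆ S ∧ s ∈ O) =
      (if orb π s ⊆ S then {orb π s} else ∅) := by
    split_ifs with h
    · ext O
      simp only [Finset.mem_filter, Finset.mem_singleton]
      constructor
      · rintro ⟨hO, _, hsO⟩
        exact eq_orb_of_mem_orbs hO hsO
      · rintro rfl
        exact ⟨orb_mem_orbs π s, h, self_mem_orb π s⟩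
    · ext O
      simp only [Finset.mem_filter, Finset.notMem_empty, iff_false]
      rintro ⟨hO, hOS, hsO⟩
      exact h (by rw [← eq_orb_of_mem_orbs hO hsO]; exact hOS)
  rw [cS, hsplit, Finset.card_union_of_disjoint hdisj, hsec]
  split_ifs <;> simp

lemma cS_erase {π : Perm α} {S : Finset α} (s : α) (hs : s ∈ S) :
    cS (S.erase s) π = ((orbs π).filter (fun O => O ⊆ S ∧ s ∉ O)).card := by
  unfold cS
  congr 1
  apply Finset.filter_congr
  intro O _
  simp [Finset.subset_erase]

/-- invariance of orbits avoiding `s` and contained in `S` -/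
lemma filter_orbs_swap_subset {π : Perm α} {s x : α} {S : Finset α} (hx : x ∉ S) :
    (orbs π).filter (fun O => O ⊆ S ∧ s ∉ O) ⊆
      (orbs (swap s x * π)).filter (fun O => O ⊆ S ∧ s ∉ O) := by
  intro O hO
  simp only [Finset.mem_filter] at hO ⊢
  obtain ⟨hOmem, hOS, hsO⟩ := hO
  obtain ⟨a, _, rfl⟩ := Finset.mem_image.1 hOmem
  have := orb_swap_eq (π := π) (a := a) hOS hsO hx
  exact ⟨this ▸ orb_mem_orbs (swap s x * π) a, hOS, hsO⟩

lemma filter_orbs_swap_eq {π : Perm α} {s x : α} {S : Finset α} (hx : x ∉ S) :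
    (orbs (swap s x * π)).filter (fun O => O ⊆ S ∧ s ∉ O) =
      (orbs π).filter (fun O => O ⊆ S ∧ s ∉ O) := by
  apply Finset.Subset.antisymm
  · have h := filter_orbs_swap_subset (π := swap s x * π) (s := s) (x := x) (S := S) hx
    rwa [← mul_assoc, Equiv.swap_mul_self, one_mul] at h
  · exact filter_orbs_swap_subset hx

/-- The key counting identity (★). -/
lemma star_identity (π : Perm α) {S : Finset α} {s : α} (hs : s ∈ S) (z : ℂ) :
    z ^ (cS (S.erase s) π) * (z + (Sᶜ.card : ℂ)) =
      z ^ (cS S π) + ∑ x ∈ Sᶜ, z ^ (cS S (swap s x * π)) := by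
  classical
  set c₀ := ((orbs π).filter (fun O => O ⊆ S ∧ s ∉ O)).card with hc₀
  have h₀ : cS (S.erase s) π = c₀ := cS_erase s hs
  have hS : cS S π = c₀ + (if orb π s ⊆ S then 1 else 0) := cS_split s
  have hSx : ∀ x ∈ Sᶜ, cS S (swap s x * π) =
      c₀ + (if orb (swap s x * π) s ⊆ S then 1 else 0) := by
    intro x hx
    rw [cS_split s, filter_orbs_swap_eq (Finset.mem_compl.1 hx)]
  rw [h₀, hS]
  rw [Finset.sum_congr rfl (fun x hx => by rw [hSx x hx])]
  by_cases hOs : orb π s ⊆ S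
  · -- orbit of s inside S: every swap opens it up
    have hx0 : ∀ x ∈ Sᶜ, ¬ orb (swap s x * π) s ⊆ S := by
      intro x hx
      exact not_orb_swap_subset hs (Finset.mem_compl.1 hx) hOs
    rw [if_pos hOs]
    rw [Finset.sum_congr rfl (fun x hx => by rw [if_neg (hx0 x hx)])]
    simp only [add_zero, Finset.sum_const, nsmul_eq_mul]
    rw [pow_succ]
    ring
  · -- orbit of s leaves S: unique exit point
    obtain ⟨xs, hxsS, hxs⟩ := exists_unique_exit hs hOs
    rw [if_neg hOs, add_zero]
    have hsum : ∑ x ∈ Sᶜ, z ^ (c₀ + if orb (swap s x * π) s ⊆ S then 1 else 0)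
        = ∑ x ∈ Sᶜ, (z ^ c₀ * (if x = xs then z - 1 else 0) + z ^ c₀) := by
      apply Finset.sum_congr rfl
      intro x hx
      have hxS : x ∉ S := Finset.mem_compl.1 hx
      by_cases hxx : x = xs
      · rw [if_pos ((hxs x hxS).2 hxx), if_pos hxx, pow_succ]; ring
      · rw [if_neg (fun hh => hxx ((hxs x hxS).1 hh)), if_neg hxx, add_zero]
        ring
    rw [hsum, Finset.sum_add_distrib, ← Finset.mul_sum, Finset.sum_ite_eq' Sᶜ xs
      (fun _ => z - 1)]
    rw [if_pos (Finset.mem_compl.2 hxsS)]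
    simp only [Finset.sum_const, nsmul_eq_mul]
    ring

/-- The master lemma: partial convolution of `z^{number of orbits}` against permutations
fixing `S` pointwise. -/
lemma master_lemma (z : ℂ) : ∀ (n : ℕ) (S : Finset α) (π : Perm α), Sᶜ.card = n →
    ∑ σ ∈ univ.filter (fun σ : Perm α => ∀ a ∈ S, σ a = a), z ^ (orbs (σ⁻¹ * π)).card
      = z ^ (cS S π) * (∏ j ∈ Finset.range n, (z + j)) := by
  intro n
  induction n with
  | zero =>
    intro S π hS
    have hSuniv : S = univ := by
      have : Sᶜ = ∅ := Finset.card_eq_zero.1 hS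
      rwa [Finset.compl_eq_empty_iff] at this
    subst hSuniv
    have hfilter : univ.filter (fun σ : Perm α => ∀ a ∈ (univ : Finset α), σ a = a)
        = {(1 : Perm α)} := by
      ext σ
      simp only [Finset.mem_filter, Finset.mem_univ, true_and, Finset.mem_singleton]
      constructor
      · intro hσ; ext a; exact hσ a trivial
      · rintro rfl; intro a _; rfl
    rw [hfilter, Finset.sum_singleton, inv_one, one_mul, cS_univ]
    simp
  | succ n IH =>
    intro S π hS
    have hsne : Sᶜ.Nonempty := Finset.card_pos.1 (by omega)
    obtain ⟨s, hsmem⟩ := hsne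
    have hsS : s ∉ S := Finset.mem_compl.1 hsmem
    set S' := insert s S with hS'
    have hS'c : S'ᶜ = Sᶜ.erase s := Finset.compl_insert
    have hS'card : S'ᶜ.card = n := by
      rw [hS'c, Finset.card_erase_of_mem hsmem, hS]
      omega
    have hmaps : ∀ σ ∈ univ.filter (fun σ : Perm α => ∀ a ∈ S, σ a = a), σ s ∈ Sᶜ := by
      intro σ hσ
      simp only [Finset.mem_filter, Finset.mem_univ, true_and] at hσ
      rw [Finset.mem_compl]
      intro hmem
      have h1 : σ (σ s) = σ s := hσ _ hmem
      have h2 : σ s = s := σ.injective h1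
      rw [h2] at hmem
      exact hsS hmem
    rw [← Finset.sum_fiberwise_of_maps_to hmaps, ← Finset.add_sum_erase _ _ hsmem]
    -- the fiber at s is the sum over permutations fixing S'
    have hfib_s : (univ.filter (fun σ : Perm α => ∀ a ∈ S, σ a = a)).filter
        (fun σ => σ s = s) = univ.filter (fun σ : Perm α => ∀ a ∈ S', σ a = a) := by
      ext σ
      simp only [Finset.mem_filter, Finset.mem_univ, true_and, hS', Finset.mem_insert]
      constructor
      · rintro ⟨h1, h2⟩ a (rfl | ha)
        · exact h2
        · exact h1 a ha
      · intro hσ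
        exact ⟨fun a ha => hσ a (Or.inr ha), hσ s (Or.inl rfl)⟩
    have hfib_x : ∀ x ∈ Sᶜ.erase s,
        ∑ σ ∈ (univ.filter (fun σ : Perm α => ∀ a ∈ S, σ a = a)).filter (fun σ => σ s = x),
          z ^ (orbs (σ⁻¹ * π)).card
        = ∑ σ ∈ univ.filter (fun σ : Perm α => ∀ a ∈ S', σ a = a),
            z ^ (orbs (σ⁻¹ * (swap s x * π))).card := by
      intro x hx
      have hxs : x ≠ s := Finset.ne_of_mem_erase hx
      have hxS : x ∉ S := Finset.mem_compl.1 (Finset.mem_of_mem_erase hx)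
      apply Finset.sum_nbij' (fun σ => swap s x * σ) (fun σ => swap s x * σ)
      · intro σ hσ
        simp only [Finset.mem_filter, Finset.mem_univ, true_and] at hσ ⊢
        intro a ha
        rw [hS', Finset.mem_insert] at ha
        rcases ha with rfl | ha
        · rw [Perm.mul_apply, hσ.2, Equiv.swap_apply_right]
        · rw [Perm.mul_apply, hσ.1 a ha, Equiv.swap_apply_of_ne_of_ne]
          · intro he; rw [he] at ha; exact hsS ha
          · intro he; rw [he] at ha; exact hxS ha
      · intro σ hσ
        simp only [Finset.mem_filter, Finset.mem_univ, true_and] at hσ ⊢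
        constructor
        · intro a ha
          rw [Perm.mul_apply, hσ a (by rw [hS']; exact Finset.mem_insert_of_mem ha),
            Equiv.swap_apply_of_ne_of_ne]
          · intro he; rw [he] at ha; exact hsS ha
          · intro he; rw [he] at ha; exact hxS ha
        · rw [Perm.mul_apply, hσ s (by rw [hS']; exact Finset.mem_insert_self s S),
            Equiv.swap_apply_left]
      · intro σ _; rw [← mul_assoc, Equiv.swap_mul_self, one_mul]
      · intro σ _; rw [← mul_assoc, Equiv.swap_mul_self, one_mul]
      · intro σ _
        congr 2
        group
    rw [hfib_s, IH S' π hS'card]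
    rw [Finset.sum_congr rfl hfib_x]
    rw [Finset.sum_congr rfl (fun x hx => IH S' (swap s x * π)
      (by rw [hS'c] at hS'card ⊢; exact hS'card))]
    have hstar := star_identity (S := S') (s := s) π (Finset.mem_insert_self s S) z
    rw [Finset.erase_insert hsS] at hstar
    rw [hS'c] at hstar
    have hcard : ((S'ᶜ.card : ℕ) : ℂ) = (n : ℂ) := by rw [hS'card]
    rw [hS'c] at hcard
    calc z ^ cS S' π * ∏ j ∈ Finset.range n, (z + ↑j)
          + ∑ x ∈ Sᶜ.erase s, z ^ cS S' (swap s x * π) * ∏ j ∈ Finset.range n, (z + ↑j)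
        = (z ^ cS S' π + ∑ x ∈ Sᶜ.erase s, z ^ cS S' (swap s x * π))
            * ∏ j ∈ Finset.range n, (z + ↑j) := by rw [add_mul, Finset.sum_mul]
      _ = (z ^ cS S π * (z + (Sᶜ.erase s).card)) * ∏ j ∈ Finset.range n, (z + ↑j) := by
            rw [← hstar]
      _ = z ^ cS S π * ∏ j ∈ Finset.range (n+1), (z + ↑j) := by
            rw [Finset.prod_range_succ, hcard]
            ring
lemma master_ite (z : ℂ) (m : ℕ) (S : Finset α) (π : Perm α) (hm : Sᶜ.card = m) :
    ∑ σ : Perm α, (if ∀ a ∈ S, σ a = a then z ^ (orbs (σ⁻¹ * π)).card else 0)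
      = z ^ (cS S π) * (∏ j ∈ Finset.range m, (z + j)) := by
  rw [← master_lemma z m S π hm, Finset.sum_filter]

lemma sum_powerset_pow_card {β : Type*} [DecidableEq β] (F : Finset β) (y : ℂ) :
    ∑ W ∈ F.powerset, y ^ W.card = (y + 1) ^ F.card := by
  rw [Finset.sum_powerset]
  rw [add_pow]
  apply Finset.sum_congr rfl
  intro j hj
  have : ∀ W ∈ Finset.powersetCard j F, y ^ W.card = y ^ j := by
    intro W hW
    rw [(Finset.mem_powersetCard.1 hW).2]
  rw [Finset.sum_congr rfl this, Finset.sum_const, Finset.card_powersetCard, nsmul_eq_mul]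
  push_cast
  ring

lemma sum_powerset_ite_subset {α : Type*} [Fintype α] [DecidableEq α] (A : Finset α) :
    ∑ S ∈ (univ : Finset α).powerset,
        (if A ⊆ S then (-1 : ℂ) ^ (Fintype.card α - S.card) else 0)
      = if A = univ then 1 else 0 := by
  classical
  rw [← Finset.sum_filter]
  have hZ : (∑ T ∈ Aᶜ.powerset, (-1 : ℤ) ^ T.card) = if Aᶜ = ∅ then 1 else 0 :=
    Finset.sum_powerset_neg_one_pow_card
  have h : (∑ T ∈ Aᶜ.powerset, (-1 : ℂ) ^ T.card) = if Aᶜ = ∅ then 1 else 0 := by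
    exact_mod_cast hZ
  have hbij : ∑ S ∈ (univ : Finset α).powerset.filter (fun S => A ⊆ S),
      (-1 : ℂ) ^ (Fintype.card α - S.card) = ∑ T ∈ Aᶜ.powerset, (-1 : ℂ) ^ T.card := by
    apply Finset.sum_nbij' (fun S => Sᶜ) (fun T => Tᶜ)
    · intro S hS
      simp only [Finset.mem_filter, Finset.mem_powerset] at hS
      rw [Finset.mem_powerset]
      exact Finset.compl_subset_compl.2 hS.2
    · intro T hT
      simp only [Finset.mem_filter, Finset.mem_powerset]
      rw [Finset.mem_powerset] at hT
      exact ⟨Finset.subset_univ _, by rwa [← Finset.compl_subset_compl, compl_compl] at hT⟩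
    · intro S _; exact compl_compl S
    · intro T _; exact compl_compl T
    · intro S _
      rw [Finset.card_compl]
  rw [hbij, h]
  congr 1
  rw [Finset.compl_eq_empty_iff]

lemma incl_excl (π : Perm α) (z : ℂ) :
    ∑ S ∈ (univ : Finset α).powerset,
        (-1 : ℂ) ^ (Fintype.card α - S.card) * z ^ (cS S π)
      = (z - 1) ^ (orbs π).card := by
  classical
  have hstep1 : ∀ S : Finset α, z ^ (cS S π)
      = ∑ W ∈ (orbs π).powerset,
          (if ∀ O ∈ W, O ⊆ S then (z - 1) ^ W.card else 0) := by
    intro S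
    have h1 : z ^ (cS S π) = ((z - 1) + 1) ^ ((orbs π).filter (· ⊆ S)).card := by
      rw [sub_add_cancel]; rfl
    rw [h1, ← sum_powerset_pow_card]
    have h2 : ((orbs π).filter (· ⊆ S)).powerset
        = (orbs π).powerset.filter (fun W => ∀ O ∈ W, O ⊆ S) := by
      ext W
      simp only [Finset.mem_powerset, Finset.mem_filter]
      constructor
      · intro h
        exact ⟨h.trans (Finset.filter_subset _ _), fun O hO => (Finset.mem_filter.1 (h hO)).2⟩
      · rintro ⟨h1, h2⟩ O hO
        exact Finset.mem_filter.2 ⟨h1 hO, h2 O hO⟩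
    rw [h2, Finset.sum_filter]
  rw [Finset.sum_congr rfl (fun S _ => by rw [hstep1 S])]
  rw [Finset.sum_congr rfl (fun S _ => Finset.mul_sum _ _ _)]
  rw [Finset.sum_comm]
  have hinner : ∀ W ∈ (orbs π).powerset,
      ∑ S ∈ (univ : Finset α).powerset,
          (-1 : ℂ) ^ (Fintype.card α - S.card) * (if ∀ O ∈ W, O ⊆ S then (z - 1) ^ W.card else 0)
        = (if W.sup id = univ then 1 else 0) * (z - 1) ^ W.card := by
    intro W _
    have hcond : ∀ S : Finset α, (∀ O ∈ W, O ⊆ S) ↔ W.sup id ⊆ S := by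
      intro S
      constructor
      · intro h
        exact Finset.sup_le fun O hO => h O hO
      · intro h O hO
        exact (Finset.le_sup (f := id) hO).trans h
    have : ∀ S ∈ (univ : Finset α).powerset,
        (-1 : ℂ) ^ (Fintype.card α - S.card) * (if ∀ O ∈ W, O ⊆ S then (z - 1) ^ W.card else 0)
          = (if W.sup id ⊆ S then (-1 : ℂ) ^ (Fintype.card α - S.card) else 0)
              * (z - 1) ^ W.card := by
      intro S _
      by_cases hc : ∀ O ∈ W, O ⊆ S
      · rw [if_pos hc, if_pos ((hcond S).1 hc)]
      · rw [if_neg hc, if_neg (fun hh => hc ((hcond S).2 hh))]; ring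
    rw [Finset.sum_congr rfl this, ← Finset.sum_mul, sum_powerset_ite_subset]
  rw [Finset.sum_congr rfl hinner]
  have hunique : ∀ W ∈ (orbs π).powerset, W ≠ orbs π →
      (if W.sup id = univ then (1:ℂ) else 0) * (z - 1) ^ W.card = 0 := by
    intro W hW hne
    rw [Finset.mem_powerset] at hW
    have : ¬ (W.sup id = univ) := by
      intro hsup
      apply hne
      apply Finset.Subset.antisymm hW
      intro O hO
      obtain ⟨a, _, rfl⟩ := Finset.mem_image.1 hO
      have ha : a ∈ W.sup id := by rw [hsup]; exact Finset.mem_univ a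
      obtain ⟨O', hO', haO'⟩ := Finset.mem_sup.1 ha
      have : O' = orb π a := eq_orb_of_mem_orbs (hW hO') haO'
      rwa [← this]
    rw [if_neg this, zero_mul]
  rw [Finset.sum_eq_single (orbs π) hunique
    (fun h => absurd (Finset.mem_powerset.2 (Finset.Subset.refl _)) h)]
  have hsup : (orbs π).sup id = univ := by
    apply Finset.eq_univ_of_forall
    intro a
    exact Finset.mem_sup.2 ⟨orb π a, orb_mem_orbs π a, self_mem_orb π a⟩
  rw [if_pos hsup, one_mul]


section Assembly
open Equiv Equiv.Perm
variable {k : ℕ}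

lemma conv_deltaE (f : Equiv.Perm (Fin k) → ℂ) : conv f deltaE = f := by
  funext π
  unfold conv deltaE
  rw [Finset.sum_congr rfl (fun σ _ => by
    show f σ * (if σ⁻¹ * π = 1 then 1 else 0) = if σ = π then f σ else 0
    by_cases h : σ = π
    · subst h; rw [if_pos rfl, if_pos (by group), mul_one]
    · rw [if_neg h, if_neg (fun he => h (by
        have h2 : σ * (σ⁻¹ * π) = σ * 1 := by rw [he]
        rw [← mul_assoc, mul_inv_cancel, one_mul, mul_one] at h2
        exact h2.symm)), mul_zero])]
  rw [Finset.sum_ite_eq' Finset.univ π f, if_pos (Finset.mem_univ π)]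

lemma deltaE_conv (f : Equiv.Perm (Fin k) → ℂ) : conv deltaE f = f := by
  funext π
  unfold conv deltaE
  rw [Finset.sum_eq_single 1 (fun σ _ hne => by rw [if_neg hne, zero_mul])
    (fun h => absurd (Finset.mem_univ _) h)]
  rw [if_pos rfl, inv_one, one_mul, one_mul]

lemma conv_assoc (f g h : Equiv.Perm (Fin k) → ℂ) :
    conv (conv f g) h = conv f (conv g h) := by
  funext π
  unfold conv
  simp only [Finset.sum_mul, Finset.mul_sum]
  rw [Finset.sum_comm]
  apply Finset.sum_congr rfl
  intro σ _
  apply Fintype.sum_equiv (Equiv.mulLeft σ⁻¹)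
  intro τ
  simp only [Equiv.coe_mulLeft]
  have h1 : (σ⁻¹ * τ)⁻¹ * (σ⁻¹ * π) = τ⁻¹ * π := by group
  rw [h1, mul_assoc]

lemma cyc_conj (τ σ : Equiv.Perm (Fin k)) : cyc (τ * σ * τ⁻¹) = cyc σ := by
  unfold cyc
  rw [Equiv.Perm.cycleType_conj]
  congr 1
  have h1 : ∀ ρ : Equiv.Perm (Fin k),
      (Finset.univ.filter fun i => ρ i = i) = ρ.supportᶜ := by
    intro ρ; ext a; simp [Equiv.Perm.mem_support]
  rw [h1, h1, Finset.card_compl, Finset.card_compl, Equiv.Perm.support_conj,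
    Finset.card_map]

lemma conv_Gfun_comm (z : ℂ) (f : Equiv.Perm (Fin k) → ℂ) :
    conv (Gfun k z) f = conv f (Gfun k z) := by
  funext π
  unfold conv Gfun
  apply Fintype.sum_bijective (fun σ => σ⁻¹ * π) (by
    constructor
    · intro a b hab
      exact inv_injective (mul_right_cancel hab)
    · intro τ
      exact ⟨π * τ⁻¹, by group⟩)
  intro σ
  show z ^ cyc σ * f (σ⁻¹ * π) = f (σ⁻¹ * π) * z ^ cyc ((σ⁻¹ * π)⁻¹ * π)
  have h3 : cyc ((σ⁻¹ * π)⁻¹ * π) = cyc σ := by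
    have he : (σ⁻¹ * π)⁻¹ * π = π⁻¹ * σ * π := by group
    rw [he]
    have := cyc_conj π⁻¹ σ
    rwa [inv_inv] at this
  rw [h3]
  ring


lemma cyc_eq_card_orbs {k : ℕ} (τ : Equiv.Perm (Fin k)) : cyc τ = (orbs τ).card := by
  unfold cyc
  rw [card_orbs]

lemma ascC_ne_zero {n : ℕ} (hn : 1 ≤ n) (m : ℕ) : ascC (n : ℂ) m ≠ 0 := by
  unfold ascC
  apply Finset.prod_ne_zero_iff.2
  intro j _
  have hcast : ((n : ℂ) + j) = ((n + j : ℕ) : ℂ) := by push_cast; ring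
  rw [hcast]
  exact Nat.cast_ne_zero.2 (by omega)

lemma asc_powerset {k n : ℕ} (σ : Equiv.Perm (Fin k)) :
    AscFun k n σ = ∑ S ∈ (Finset.univ.filter fun i => σ i = i).powerset,
      (-1 : ℂ) ^ (k - S.card) / ascC (n : ℂ) (k - S.card) := by
  rw [Finset.sum_powerset]
  unfold AscFun fixCount
  apply Finset.sum_congr rfl
  intro t _
  rw [Finset.sum_congr rfl (fun S hS => by rw [(Finset.mem_powersetCard.1 hS).2]),
    Finset.sum_const, Finset.card_powersetCard, nsmul_eq_mul]
  ring

lemma main_eq {k n : ℕ} (h : k + 1 ≤ n) :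
    conv (AscFun k n) (Gfun k (n : ℂ)) = Gfun k ((n - 1 : ℕ) : ℂ) := by
  have hn1 : 1 ≤ n := by omega
  funext π
  show ∑ σ : Equiv.Perm (Fin k), AscFun k n σ * Gfun k (n : ℂ) (σ⁻¹ * π)
      = Gfun k ((n - 1 : ℕ) : ℂ) π
  have hpow : ∀ (F : Finset (Fin k)), F.powerset
      = (Finset.univ.powerset : Finset (Finset (Fin k))).filter (· ⊆ F) := by
    intro F
    ext S
    simp [Finset.mem_powerset]
  have hstep1 : ∀ σ : Equiv.Perm (Fin k),
      AscFun k n σ * Gfun k (n : ℂ) (σ⁻¹ * π)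
        = ∑ S ∈ (Finset.univ : Finset (Fin k)).powerset,
            (if S ⊆ Finset.univ.filter (fun i => σ i = i) then
              (-1 : ℂ) ^ (k - S.card) / ascC (n : ℂ) (k - S.card)
                * (n : ℂ) ^ (orbs (σ⁻¹ * π)).card else 0) := by
    intro σ
    rw [asc_powerset σ, Finset.sum_mul, hpow, Finset.sum_filter]
    apply Finset.sum_congr rfl
    intro S _
    split_ifs with hc
    · unfold Gfun
      rw [cyc_eq_card_orbs]
    · rfl
  rw [Finset.sum_congr rfl (fun σ _ => hstep1 σ), Finset.sum_comm]
  have hstep2 : ∀ S ∈ (Finset.univ : Finset (Fin k)).powerset,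
      (∑ σ : Equiv.Perm (Fin k),
        (if S ⊆ Finset.univ.filter (fun i => σ i = i) then
          (-1 : ℂ) ^ (k - S.card) / ascC (n : ℂ) (k - S.card)
            * (n : ℂ) ^ (orbs (σ⁻¹ * π)).card else 0))
      = (-1 : ℂ) ^ (k - S.card) * (n : ℂ) ^ (cS S π) := by
    intro S _
    have hcond : ∀ σ : Equiv.Perm (Fin k),
        (S ⊆ Finset.univ.filter (fun i => σ i = i)) ↔ (∀ a ∈ S, σ a = a) := by
      intro σ
      constructor
      · intro hsub a ha
        exact (Finset.mem_filter.1 (hsub ha)).2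
      · intro hfix a ha
        exact Finset.mem_filter.2 ⟨Finset.mem_univ a, hfix a ha⟩
    have hite : ∀ σ : Equiv.Perm (Fin k),
        (if S ⊆ Finset.univ.filter (fun i => σ i = i) then
          (-1 : ℂ) ^ (k - S.card) / ascC (n : ℂ) (k - S.card)
            * (n : ℂ) ^ (orbs (σ⁻¹ * π)).card else 0)
        = (if (∀ a ∈ S, σ a = a) then
            (-1 : ℂ) ^ (k - S.card) / ascC (n : ℂ) (k - S.card)
              * (n : ℂ) ^ (orbs (σ⁻¹ * π)).card else 0) := by
      intro σ
      by_cases hc : ∀ a ∈ S, σ a = a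
      · rw [if_pos ((hcond σ).2 hc), if_pos hc]
      · rw [if_neg (fun hh => hc ((hcond σ).1 hh)), if_neg hc]
    have hpull : ∀ σ : Equiv.Perm (Fin k),
        (if (∀ a ∈ S, σ a = a) then
          (-1 : ℂ) ^ (k - S.card) / ascC (n : ℂ) (k - S.card)
            * (n : ℂ) ^ (orbs (σ⁻¹ * π)).card else 0)
        = (-1 : ℂ) ^ (k - S.card) / ascC (n : ℂ) (k - S.card)
            * (if (∀ a ∈ S, σ a = a) then (n : ℂ) ^ (orbs (σ⁻¹ * π)).card else 0) := by
      intro σ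
      split_ifs
      · rfl
      · rw [mul_zero]
    have hcompl : ((Sᶜ : Finset (Fin k))).card = k - S.card := by
      rw [Finset.card_compl, Fintype.card_fin]
    have hascd : ascC (n : ℂ) (k - S.card) = ∏ j ∈ Finset.range (k - S.card), ((n : ℂ) + j) :=
      rfl
    rw [Finset.sum_congr rfl (fun σ _ => (hite σ).trans (hpull σ)), ← Finset.mul_sum]
    have hmi : (∑ σ : Equiv.Perm (Fin k),
        (if (∀ a ∈ S, σ a = a) then ((n : ℕ) : ℂ) ^ (orbs (σ⁻¹ * π)).card else 0))
        = ((n : ℕ) : ℂ) ^ cS S π * ascC (n : ℂ) (k - S.card) := by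
      rw [hascd]
      convert master_ite ((n : ℕ) : ℂ) (k - S.card) S π hcompl using 2 with σ
      split_ifs <;> rfl
    rw [hmi]
    have hA := ascC_ne_zero hn1 (k - S.card)
    field_simp
  rw [Finset.sum_congr rfl hstep2]
  have hie := incl_excl (α := Fin k) π ((n : ℕ) : ℂ)
  rw [Fintype.card_fin] at hie
  rw [hie]
  unfold Gfun
  rw [cyc_eq_card_orbs]
  congr 1
  push_cast [hn1]
  ring

end Assembly

end AscWgAux

/-- For `k + 1 ≤ n`, the ascension function satisfies
`Asc_{k,n} = G_{k,n-1} * Wg_{k,n} = Wg_{k,n} * G_{k,n-1}` in `ℂ[S_k]`. -/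
theorem ascension_eq_G_conv_Wg (k n : ℕ) (h : k + 1 ≤ n)
    (Wgn : Equiv.Perm (Fin k) → ℂ)
    (h1 : conv (Gfun k (n : ℂ)) Wgn = deltaE)
    (h1' : conv Wgn (Gfun k (n : ℂ)) = deltaE) :
    AscFun k n = conv (Gfun k ((n - 1 : ℕ) : ℂ)) Wgn ∧
    AscFun k n = conv Wgn (Gfun k ((n - 1 : ℕ) : ℂ)) := by
  have hmain : conv (AscFun k n) (Gfun k (n : ℂ)) = Gfun k ((n - 1 : ℕ) : ℂ) :=
    AscWgAux.main_eq h
  have hmain' : conv (Gfun k (n : ℂ)) (AscFun k n) = Gfun k ((n - 1 : ℕ) : ℂ) := by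
    rw [AscWgAux.conv_Gfun_comm]
    exact hmain
  constructor
  · calc AscFun k n = conv (AscFun k n) deltaE := (AscWgAux.conv_deltaE _).symm
      _ = conv (AscFun k n) (conv (Gfun k (n : ℂ)) Wgn) := by rw [h1]
      _ = conv (conv (AscFun k n) (Gfun k (n : ℂ))) Wgn := (AscWgAux.conv_assoc _ _ _).symm
      _ = conv (Gfun k ((n - 1 : ℕ) : ℂ)) Wgn := by rw [hmain]
  · calc AscFun k n = conv deltaE (AscFun k n) := (AscWgAux.deltaE_conv _).symm
      _ = conv (conv Wgn (Gfun k (n : ℂ))) (AscFun k n) := by rw [h1']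
      _ = conv Wgn (conv (Gfun k (n : ℂ)) (AscFun k n)) := AscWgAux.conv_assoc _ _ _
      _ = conv Wgn (Gfun k ((n - 1 : ℕ) : ℂ)) := by rw [hmain']
end
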